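/- Let F_q be a finite field of odd order, n ≥ 2, a_1,...,a_n ∈ F_q^*, b_1,...,b_n ∈ F_q not all zero, and a_0, b_0 ∈ F_q. Set a = a_1···a_n, b = b_1^2 a_1^{-1} + ... + b_n^2 a_n^{-1}, c = b_0^2 - a_0 b. If b = 0 and c ≠ 0, then the number of common solutions (x_1,...,x_n) ∈ F_q^n of the system a_1 x_1^2 + ... + a_n x_n^2 = a_0 and b_1 x_1 + ... + b_n x_n = b_0 equals q^{n-2}. -/

import Mathlib

open Finset

private lemma sum_split {F : Type*} [AddCommMonoid F] {n : ℕ} (f : Fin n → F) (j : Fin n) :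
    ∑ i, f i = f j + ∑ i : {i : Fin n // i ≠ j}, f i.1 := by
  rw [← Finset.add_sum_erase _ f (Finset.mem_univ j)]
  congr 1
  rw [← Finset.sum_subtype (Finset.univ.erase j) (fun x => by simp) f]

private lemma card_hyperplane (F : Type*) [Field F] [Fintype F] {n : ℕ} (c : Fin n → F)
    (j : Fin n) (hj : c j ≠ 0) (d : F) :
    Nat.card {x : Fin n → F // ∑ i, c i * x i = d} = Fintype.card F ^ (n - 1) := by
  classical
  have e : {x : Fin n → F // ∑ i, c i * x i = d} ≃ ({i : Fin n // i ≠ j} → F) :=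
    { toFun := fun x i => x.1 i.1
      invFun := fun f =>
        ⟨fun i => if h : i = j then (d - ∑ i' : {i : Fin n // i ≠ j}, c i'.1 * f i') * (c j)⁻¹
          else f ⟨i, h⟩, by
          rw [sum_split (fun i => c i * _) j]
          simp only [dif_pos rfl, eq_self_iff_true, dite_true]
          have : ∀ i' : {i : Fin n // i ≠ j},
              c i'.1 * (if h : i'.1 = j then (d - ∑ i' : {i : Fin n // i ≠ j}, c i'.1 * f i') * (c j)⁻¹
                else f ⟨i'.1, h⟩) = c i'.1 * f i' := by
            intro i'; rw [dif_neg i'.2]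
          rw [Finset.sum_congr rfl (fun i' _ => this i')]
          field_simp
          ring⟩
      left_inv := fun x => by
        ext i
        by_cases h : i = j
        · simp only [dif_pos h, h, eq_self_iff_true, dite_true]
          have hx := x.2
          rw [sum_split (fun i => c i * x.1 i) j] at hx
          simp only [ne_eq] at hx ⊢
          field_simp
          linear_combination -hx
        · simp [dif_neg h]
      right_inv := fun f => by
        ext i
        simp [dif_neg i.2] }
  rw [Nat.card_congr e, Nat.card_eq_fintype_card, Fintype.card_fun, Fintype.card_subtype_compl]
  simp

theorem stmt_8 (F : Type*) [Field F] [Fintype F] (hq : Odd (Fintype.card F))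
    (n : ℕ) (hn : 2 ≤ n) (a b : Fin n → F) (ha : ∀ i, a i ≠ 0) (hb : ∃ i, b i ≠ 0)
    (a0 b0 : F)
    (hB : ∑ i, (b i) ^ 2 * (a i)⁻¹ = 0)
    (hc : b0 ^ 2 - a0 * (∑ i, (b i) ^ 2 * (a i)⁻¹) ≠ 0) :
    Nat.card {x : Fin n → F //
        (∑ i, a i * (x i) ^ 2) = a0 ∧ (∑ i, b i * x i) = b0}
      = Fintype.card F ^ (n - 2) := by
  classical
  obtain ⟨j, hj⟩ := hb
  have hb0 : b0 ≠ 0 := by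
    rw [hB, mul_zero, sub_zero] at hc
    exact fun h => hc (by rw [h]; ring)
  have h2 : (2 : F) ≠ 0 := by
    apply Ring.two_ne_zero
    intro h
    have := FiniteField.even_card_of_char_two h
    rw [Nat.odd_iff] at hq
    omega
  have h2b0 : 2 * b0 ≠ 0 := mul_ne_zero h2 hb0
  set v : Fin n → F := fun i => b i * (a i)⁻¹ with hv
  -- key identities
  have hBv : ∀ x : Fin n → F, ∀ t : F, (∑ i, b i * (x i + t * v i)) = (∑ i, b i * x i) + t * ∑ i, (b i) ^ 2 * (a i)⁻¹ := by
    intro x t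
    rw [Finset.mul_sum, ← Finset.sum_add_distrib]
    apply Finset.sum_congr rfl
    intro i _
    simp only [hv]; ring
  have hQv : ∀ x : Fin n → F, ∀ t : F,
      (∑ i, a i * (x i + t * v i) ^ 2) =
        (∑ i, a i * (x i) ^ 2) + 2 * t * (∑ i, b i * x i) + t ^ 2 * ∑ i, (b i) ^ 2 * (a i)⁻¹ := by
    intro x t
    rw [Finset.mul_sum, Finset.mul_sum, ← Finset.sum_add_distrib, ← Finset.sum_add_distrib]
    apply Finset.sum_congr rfl
    intro i _
    simp only [hv]
    field_simp [ha i]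
    ring
  set S := {x : Fin n → F // (∑ i, a i * (x i) ^ 2) = a0 ∧ (∑ i, b i * x i) = b0}
  set H := {x : Fin n → F // (∑ i, b i * x i) = b0}
  have e : S × F ≃ H :=
    { toFun := fun p => ⟨fun i => p.1.1 i + p.2 * v i, by
        rw [hBv, hB, mul_zero, add_zero, p.1.2.2]⟩
      invFun := fun x =>
        (⟨fun i => x.1 i + ((a0 - ∑ i, a i * (x.1 i) ^ 2) / (2 * b0)) * v i, by
          constructor
          · rw [hQv, hB, mul_zero, add_zero, x.2]
            field_simp
            ring
          · rw [hBv, hB, mul_zero, add_zero, x.2]⟩,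
         -((a0 - ∑ i, a i * (x.1 i) ^ 2) / (2 * b0)))
      left_inv := fun p => by
        obtain ⟨⟨y, hy1, hy2⟩, s⟩ := p
        have hQ : (∑ i, a i * (y i + s * v i) ^ 2) = a0 + 2 * s * b0 := by
          rw [hQv, hB, mul_zero, add_zero, hy1, hy2]
        have ht : (a0 - ∑ i, a i * ((y i + s * v i)) ^ 2) / (2 * b0) = -s := by
          rw [hQ]; field_simp; ring
        refine Prod.ext (Subtype.ext (funext fun i => ?_)) ?_
        · show y i + s * v i + _ * v i = y i
          rw [ht]; ring
        · show -((a0 - ∑ i, a i * ((y i + s * v i)) ^ 2) / (2 * b0)) = s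
          rw [ht]; ring
      right_inv := fun x => by
        ext i
        simp only
        ring }
  have hcard : Nat.card S * Fintype.card F = Fintype.card F ^ (n - 1) := by
    have := Nat.card_congr e
    rw [Nat.card_prod, Nat.card_eq_fintype_card (α := F)] at this
    rw [this, card_hyperplane F b j hj b0]
  have hq0 : 0 < Fintype.card F := Fintype.card_pos
  have hpow : Fintype.card F ^ (n - 1) = Fintype.card F ^ (n - 2) * Fintype.card F := by
    rw [← pow_succ]
    congr 1
    omega
  rw [hpow] at hcard
  exact Nat.eq_of_mul_eq_mul_right hq0 hcard
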